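/- Under the hypotheses of the previous context (q = q̃ not assumed), if additionally P₁₁(x,λ) ≡ 1 and P₁₂(x,λ) ≡ 0 for all x ∈ [0,a] and all λ, then Φ(x,λ) = Φ̃(x,λ) and S(x,λ) = S̃(x,λ) for all x, λ, and consequently q = q̃ almost everywhere on [0,a]. -/

import Mathlib

open MeasureTheory Filter Complex Set Topology

noncomputable section

/-- `y` solves `-y'' + q y = lam * y` on the set `s` (a.e.), with `y`, `y'`
absolutely continuous (here: differentiable with differentiable derivative). -/
def SolvesOn (q : ℝ → ℂ) (lam : ℂ) (y : ℝ → ℂ) (s : Set ℝ) : Prop :=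
  DifferentiableOn ℝ y s ∧ DifferentiableOn ℝ (deriv y) s ∧
  ∀ᵐ x ∂(volume.restrict s), deriv (deriv y) x = (q x - lam) * y x

/-- The potential `q` satisfies `∫₀^∞ (1+x)|q(x)| dx < ∞`. -/
def JostPot (q : ℝ → ℝ) : Prop :=
  IntegrableOn (fun x : ℝ => (1 + x) * |q x|) (Set.Ici 0) volume

/-- `e` is the Jost solution of `-y'' + q y = ρ² y` on `[0,∞)`:
`e(x)·exp(-iρx) → 1` and `e'(x)·exp(-iρx) → iρ` as `x → ∞`. -/
def IsJost (q : ℝ → ℝ) (ρ : ℂ) (e : ℝ → ℂ) : Prop :=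
  SolvesOn (fun x : ℝ => (q x : ℂ)) (ρ ^ 2) e (Set.Ici 0) ∧
  Tendsto (fun x : ℝ => e x * Complex.exp (-(Complex.I * ρ * (x : ℂ)))) atTop (𝓝 1) ∧
  Tendsto (fun x : ℝ => deriv e x * Complex.exp (-(Complex.I * ρ * (x : ℂ)))) atTop
    (𝓝 (Complex.I * ρ))

/-- constancy lemma -/
lemma aux_const_of_deriv_ae_zero {a : ℝ} (f g : ℝ → ℂ)
    (hc : ContinuousOn f (Set.Icc 0 a))
    (hd : ∀ x ∈ Set.Ioo (0:ℝ) a, HasDerivAt f (g x) x)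
    (hg : ∀ᵐ x ∂(volume.restrict (Set.Icc (0:ℝ) a)), g x = 0) :
    ∀ x ∈ Set.Icc (0:ℝ) a, f x = f 0 := by
  intro x hx
  rcases eq_or_lt_of_le hx.1 with h0 | h0
  · rw [← h0]
  have hsub : Set.Ioc (0:ℝ) x ⊆ Set.Icc 0 a := fun y hy => ⟨hy.1.le, hy.2.trans hx.2⟩
  have hg' : ∀ᵐ y ∂(volume.restrict (Set.Ioc (0:ℝ) x)), g y = 0 :=
    ae_restrict_of_ae_restrict_of_subset hsub hg
  have hint : IntervalIntegrable g volume 0 x := by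
    rw [intervalIntegrable_iff_integrableOn_Ioc_of_le h0.le]
    have hgeq : g =ᶠ[ae (volume.restrict (Set.Ioc (0:ℝ) x))] (fun _ => (0:ℂ)) := hg'
    exact (integrable_zero _ _ _).congr hgeq.symm
  have key := intervalIntegral.integral_eq_sub_of_hasDeriv_right_of_le h0.le
    (hc.mono (fun y hy => ⟨hy.1, hy.2.trans hx.2⟩))
    (fun y hy => (hd y ⟨hy.1, hy.2.trans_le hx.2⟩).hasDerivWithinAt) hint
  have hz : ∫ y in (0:ℝ)..x, g y = 0 := by
    rw [intervalIntegral.integral_of_le h0.le]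
    exact integral_eq_zero_of_ae hg'
  rw [hz] at key
  exact sub_eq_zero.mp key.symm

/-- if the spectral-mapping entries satisfy `P₁₁ ≡ 1` and `P₁₂ ≡ 0`,
then `Φ = Φ̃`, `S = S̃` on `[0,a]` for all `λ`, and consequently `q = q̃` a.e. on `[0,a]`. -/
theorem spectral_mapping_identity_implies_equality (a : ℝ) (ha : 0 < a) (q qt : ℝ → ℝ)
    (hq : IntegrableOn q (Set.Icc 0 a) volume) (hqt : IntegrableOn qt (Set.Icc 0 a) volume)
    (Φ Φt S St : ℂ → ℝ → ℂ)
    (hΦ : ∀ lam : ℂ, SolvesOn (fun x : ℝ => (q x : ℂ)) lam (Φ lam) (Set.Icc 0 a) ∧ Φ lam 0 = 1)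
    (hΦt : ∀ lam : ℂ, SolvesOn (fun x : ℝ => (qt x : ℂ)) lam (Φt lam) (Set.Icc 0 a) ∧ Φt lam 0 = 1)
    (hS : ∀ lam : ℂ, SolvesOn (fun x : ℝ => (q x : ℂ)) lam (S lam) (Set.Icc 0 a) ∧
      S lam 0 = 0 ∧ deriv (S lam) 0 = 1)
    (hSt : ∀ lam : ℂ, SolvesOn (fun x : ℝ => (qt x : ℂ)) lam (St lam) (Set.Icc 0 a) ∧
      St lam 0 = 0 ∧ deriv (St lam) 0 = 1)
    (hP11 : ∀ lam : ℂ, ∀ x ∈ Set.Icc (0:ℝ) a,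
      Φ lam x * deriv (St lam) x - deriv (Φt lam) x * S lam x = 1)
    (hP12 : ∀ lam : ℂ, ∀ x ∈ Set.Icc (0:ℝ) a,
      Φt lam x * S lam x - Φ lam x * St lam x = 0) :
    (∀ lam : ℂ, ∀ x ∈ Set.Icc (0:ℝ) a, Φ lam x = Φt lam x ∧ S lam x = St lam x) ∧
    (∀ᵐ x ∂(volume.restrict (Set.Icc (0:ℝ) a)), q x = qt x) := by
  -- Part 1: the Wronskian W = Φt·St' - Φt'·St equals 1 on [0,a], and equality follows.
  have part1 : ∀ lam : ℂ, ∀ x ∈ Set.Icc (0:ℝ) a, Φ lam x = Φt lam x ∧ S lam x = St lam x := by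
    intro lam
    obtain ⟨⟨hΦt1, hΦt2, hΦt3⟩, hΦt0⟩ := hΦt lam
    obtain ⟨⟨hSt1, hSt2, hSt3⟩, hSt0, hSt0'⟩ := hSt lam
    set W : ℝ → ℂ := fun x => Φt lam x * deriv (St lam) x - deriv (Φt lam) x * St lam x with hWdef
    have hWc : ContinuousOn W (Set.Icc 0 a) :=
      ((hΦt1.continuousOn.mul hSt2.continuousOn).sub
        (hΦt2.continuousOn.mul hSt1.continuousOn))
    have hmemIcc : ∀ x ∈ Set.Ioo (0:ℝ) a, Set.Icc (0:ℝ) a ∈ 𝓝 x :=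
      fun x hx => Icc_mem_nhds hx.1 hx.2
    have hWd : ∀ x ∈ Set.Ioo (0:ℝ) a, HasDerivAt W
        (Φt lam x * deriv (deriv (St lam)) x - deriv (deriv (Φt lam)) x * St lam x) x := by
      intro x hx
      have hx' : x ∈ Set.Icc (0:ℝ) a := Set.Ioo_subset_Icc_self hx
      have d1 : HasDerivAt (Φt lam) (deriv (Φt lam) x) x :=
        ((hΦt1 x hx').differentiableAt (hmemIcc x hx)).hasDerivAt
      have d2 : HasDerivAt (deriv (St lam)) (deriv (deriv (St lam)) x) x :=
        ((hSt2 x hx').differentiableAt (hmemIcc x hx)).hasDerivAt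
      have d3 : HasDerivAt (deriv (Φt lam)) (deriv (deriv (Φt lam)) x) x :=
        ((hΦt2 x hx').differentiableAt (hmemIcc x hx)).hasDerivAt
      have d4 : HasDerivAt (St lam) (deriv (St lam) x) x :=
        ((hSt1 x hx').differentiableAt (hmemIcc x hx)).hasDerivAt
      have := (d1.mul d2).sub (d3.mul d4)
      exact this.congr_deriv (by ring)
    have hWg : ∀ᵐ x ∂(volume.restrict (Set.Icc (0:ℝ) a)),
        Φt lam x * deriv (deriv (St lam)) x - deriv (deriv (Φt lam)) x * St lam x = 0 := by
      filter_upwards [hΦt3, hSt3] with x h1 h2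
      rw [h1, h2]; ring
    have hW1 : ∀ x ∈ Set.Icc (0:ℝ) a, W x = 1 := by
      intro x hx
      have := aux_const_of_deriv_ae_zero W _ hWc hWd hWg x hx
      rw [this, hWdef]
      simp [hΦt0, hSt0, hSt0']
    intro x hx
    have e1 := hP11 lam x hx
    have e2 := hP12 lam x hx
    have hW := hW1 x hx
    simp only [hWdef] at hW
    constructor
    · linear_combination (Φt lam x) * e1 + (deriv (Φt lam) x) * e2 - (Φ lam x) * hW
    · linear_combination (St lam x) * e1 + (deriv (St lam) x) * e2 - (S lam x) * hW
  refine ⟨part1, ?_⟩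
  -- Part 2: q = qt a.e., using lam = 0.
  obtain ⟨⟨hΦ1, hΦ2, hΦ3⟩, hΦ0⟩ := hΦ 0
  obtain ⟨⟨hΦt1, hΦt2, hΦt3⟩, hΦt0⟩ := hΦt 0
  obtain ⟨⟨hS1, hS2, hS3⟩, hS0, hS0'⟩ := hS 0
  obtain ⟨⟨hSt1, hSt2, hSt3⟩, hSt0, hSt0'⟩ := hSt 0
  have heqΦ : ∀ x ∈ Set.Icc (0:ℝ) a, Φ 0 x = Φt 0 x := fun x hx => (part1 0 x hx).1
  have heqS : ∀ x ∈ Set.Icc (0:ℝ) a, S 0 x = St 0 x := fun x hx => (part1 0 x hx).2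
  have hdΦ : ∀ x ∈ Set.Ioo (0:ℝ) a, deriv (Φ 0) x = deriv (Φt 0) x := by
    intro x hx
    exact Filter.EventuallyEq.deriv_eq
      (eventually_of_mem (Icc_mem_nhds hx.1 hx.2) heqΦ)
  have hdS : ∀ x ∈ Set.Ioo (0:ℝ) a, deriv (S 0) x = deriv (St 0) x := by
    intro x hx
    exact Filter.EventuallyEq.deriv_eq
      (eventually_of_mem (Icc_mem_nhds hx.1 hx.2) heqS)
  have hddΦ : ∀ x ∈ Set.Ioo (0:ℝ) a, deriv (deriv (Φ 0)) x = deriv (deriv (Φt 0)) x := by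
    intro x hx
    exact Filter.EventuallyEq.deriv_eq
      (eventually_of_mem (isOpen_Ioo.mem_nhds hx) hdΦ)
  have hddS : ∀ x ∈ Set.Ioo (0:ℝ) a, deriv (deriv (S 0)) x = deriv (deriv (St 0)) x := by
    intro x hx
    exact Filter.EventuallyEq.deriv_eq
      (eventually_of_mem (isOpen_Ioo.mem_nhds hx) hdS)
  have hIoo : ∀ᵐ x ∂(volume.restrict (Set.Icc (0:ℝ) a)), x ∈ Set.Ioo (0:ℝ) a := by
    rw [Measure.restrict_congr_set (Ioo_ae_eq_Icc).symm]
    exact ae_restrict_mem measurableSet_Ioo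
  filter_upwards [hΦ3, hΦt3, hS3, hSt3, hIoo, ae_restrict_mem measurableSet_Icc]
    with x o1 o2 o3 o4 hxo hxc
  by_contra hne
  have hne' : (q x : ℂ) ≠ (qt x : ℂ) := fun h => hne (by exact_mod_cast h)
  have hΦ0x : Φ 0 x = 0 := by
    have h5 : ((q x : ℂ) - (qt x : ℂ)) * Φt 0 x = 0 := by
      have h6 := hddΦ x hxo
      rw [o1, o2, heqΦ x hxc] at h6
      linear_combination h6
    rw [heqΦ x hxc]
    rcases mul_eq_zero.mp h5 with h | h
    · exact absurd (sub_eq_zero.mp h) hne'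
    · exact h
  have hS0x : S 0 x = 0 := by
    have h5 : ((q x : ℂ) - (qt x : ℂ)) * St 0 x = 0 := by
      have h6 := hddS x hxo
      rw [o3, o4, heqS x hxc] at h6
      linear_combination h6
    rw [heqS x hxc]
    rcases mul_eq_zero.mp h5 with h | h
    · exact absurd (sub_eq_zero.mp h) hne'
    · exact h
  have := hP11 0 x hxc
  rw [hΦ0x, hS0x] at this
  simp at this
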